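/- Let $G = \langle a, b \mid a^{2^{2r+s+t}} = 1, b^{2^{r+s}} = 1, a^b = a^{\varepsilon + 2^{r+t}}\rangle$ where $\varepsilon = \pm 1$, $r \geq 2$, $st = 0$. Let $1 \neq g \in G$ with $\langle g\rangle \cap \langle a\rangle = 1$ and $o(g) = 2^{r+s-k}$ for some $0 < k \leq r+s$. Then there exists $j$ with $2^{r+t+k} \mid j$ such that $\langle g\rangle = \langle b^{2^k} a^j\rangle$. -/

import Mathlib

lemma aux_pow (c : ℕ) (hc : 1 ≤ c) (w : ℤ) (n : ℕ) :
    ∃ w' : ℤ, (1 + 2^c * w)^n = 1 + 2^c * w' ∧ (2 : ℤ) ∣ (w' - n * w) := by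
  induction n with
  | zero => exact ⟨0, by ring, by simp⟩
  | succ n ih =>
    obtain ⟨w', hw', hd⟩ := ih
    refine ⟨w' + w + 2^c * (w' * w), by rw [pow_succ, hw']; ring, ?_⟩
    have h2 : (2:ℤ) ∣ 2^c := dvd_pow_self 2 (by omega)
    have : w' + w + 2 ^ c * (w' * w) - (↑(n+1)) * w = (w' - n*w) + 2^c * (w'*w) := by
      push_cast; ring
    rw [this]
    exact dvd_add hd (h2.mul_right _)

lemma aux_pow_odd (c : ℕ) (hc : 1 ≤ c) (w : ℤ) (hw : Odd w) (n : ℕ) (hn : Odd n) :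
    ∃ w' : ℤ, Odd w' ∧ (1 + 2^c * w)^n = 1 + 2^c * w' := by
  obtain ⟨w', hw', hd⟩ := aux_pow c hc w n
  refine ⟨w', ?_, hw'⟩
  have h1 : Odd ((n : ℤ) * w) := (Int.odd_coe_nat n |>.mpr hn).mul hw
  have h2 : Even (w' - n * w) := (even_iff_two_dvd).mpr hd
  have := h2.add_odd h1
  simpa using this

lemma aux_sq (c : ℕ) (hc : 2 ≤ c) (w : ℤ) (hw : Odd w) :
    ∃ w' : ℤ, Odd w' ∧ (1 + 2^c * w)^2 = 1 + 2^(c+1) * w' := by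
  obtain ⟨d, rfl⟩ : ∃ d, c = d + 2 := ⟨c - 2, by omega⟩
  refine ⟨w + 2^(d+1) * w^2, ?_, by ring⟩
  have : Even ((2:ℤ)^(d+1) * w^2) := ⟨2^d * w^2, by ring⟩
  simpa using hw.add_even this

lemma aux_iter (c : ℕ) (hc : 2 ≤ c) (w : ℤ) (hw : Odd w) (v : ℕ) :
    ∃ w' : ℤ, Odd w' ∧ (1 + 2^c * w)^(2^v) = 1 + 2^(c+v) * w' := by
  induction v with
  | zero => exact ⟨w, hw, by simp⟩
  | succ v ih =>
    obtain ⟨w', hw', h⟩ := ih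
    obtain ⟨w'', hw'', h2⟩ := aux_sq (c+v) (by omega) w' hw'
    refine ⟨w'', hw'', ?_⟩
    rw [pow_succ, pow_mul, h, h2]
    ring_nf

lemma aux_val (c : ℕ) (hc : 2 ≤ c) (w : ℤ) (hw : Odd w) (v u : ℕ) (hu : Odd u) :
    ∃ w' : ℤ, Odd w' ∧ (1 + 2^c * w)^(2^v * u) = 1 + 2^(c+v) * w' := by
  obtain ⟨w1, hw1, h1⟩ := aux_iter c hc w hw v
  obtain ⟨w2, hw2, h2⟩ := aux_pow_odd (c+v) (by omega) w1 hw1 u hu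
  exact ⟨w2, hw2, by rw [pow_mul, h1, h2]⟩

open Pointwise in
theorem stmt_8 (G : Type*) [Group G] (a b : G) (r s t : ℕ) (ε : ℤ)
    (hr : 2 ≤ r) (hst : s * t = 0) (hε : ε = 1 ∨ ε = -1)
    (ha : orderOf a = 2 ^ (2 * r + s + t)) (hb : orderOf b = 2 ^ (r + s))
    (hN : (Subgroup.zpowers a).Normal)
    (hgen : Subgroup.zpowers a ⊔ Subgroup.zpowers b = ⊤)
    (hint : Subgroup.zpowers a ⊓ Subgroup.zpowers b = ⊥)
    (hconj : b⁻¹ * a * b = a ^ (ε + 2 ^ (r + t)))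
    (g : G) (hg1 : g ≠ 1)
    (hga : Subgroup.zpowers g ⊓ Subgroup.zpowers a = ⊥)
    (k : ℕ) (hk0 : 0 < k) (hk : k ≤ r + s)
    (hog : orderOf g = 2 ^ (r + s - k)) :
    ∃ j : ℕ, 2 ^ (r + t + k) ∣ j ∧
      Subgroup.zpowers g = Subgroup.zpowers (b ^ 2 ^ k * a ^ j) := by
  set e : ℤ := ε + 2^(r+t) with he_def
  -- k < r + s
  have hklt : k < r + s := by
    rcases lt_or_eq_of_le hk with h | h
    · exact h
    · exfalso; apply hg1
      rw [← orderOf_eq_one_iff, hog, h, Nat.sub_self, pow_zero]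
  -- basic conjugation
  have hconj1 : ∀ z : ℤ, b⁻¹ * a^z * b = a^(e*z) := by
    intro z
    have h0 : b⁻¹ * a * (b⁻¹)⁻¹ = a ^ e := by rwa [inv_inv]
    calc b⁻¹ * a^z * b = b⁻¹ * a^z * (b⁻¹)⁻¹ := by rw [inv_inv]
      _ = (b⁻¹ * a * (b⁻¹)⁻¹)^z := conj_zpow.symm
      _ = (a^e)^z := by rw [h0]
      _ = a^(e*z) := by rw [← zpow_mul]
  have hmove : ∀ (w : ℕ) (z : ℤ), a^z * b^w = b^w * a^(e^w * z) := by
    intro w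
    induction w with
    | zero => intro z; simp
    | succ w ih =>
      intro z
      have h1 : a^z * b = b * a^(e*z) := by
        have := hconj1 z
        rw [← this]; group
      calc a^z * b^(w+1) = (a^z * b) * b^w := by rw [pow_succ']; group
        _ = b * (a^(e*z) * b^w) := by rw [h1]; group
        _ = b * (b^w * a^(e^w * (e*z))) := by rw [ih]
        _ = b^(w+1) * a^(e^(w+1) * z) := by rw [pow_succ']
                                            rw [mul_assoc]
                                            congr 2
                                            ring_nf
  have hpow : ∀ (mm : ℕ) (z : ℤ) (n : ℕ),
      (b^mm * a^z)^n = b^(mm*n) * a^(z * ∑ i ∈ Finset.range n, (e^mm)^i) := by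
    intro mm z n
    induction n with
    | zero => simp
    | succ n ih =>
      rw [pow_succ, ih, geom_sum_succ]
      calc b^(mm*n) * a^(z * ∑ i ∈ Finset.range n, (e^mm)^i) * (b^mm * a^z)
          = b^(mm*n) * (a^(z * ∑ i ∈ Finset.range n, (e^mm)^i) * b^mm) * a^z := by group
        _ = b^(mm*n) * (b^mm * a^(e^mm * (z * ∑ i ∈ Finset.range n, (e^mm)^i))) * a^z := by
              rw [hmove]
        _ = b^(mm*(n+1)) * a^(z * (e^mm * ∑ i ∈ Finset.range n, (e^mm)^i + 1)) := by
              rw [show mm*(n+1) = mm*n + mm by ring, pow_add]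
              rw [show z * (e^mm * ∑ i ∈ Finset.range n, (e^mm)^i + 1)
                    = e^mm * (z * ∑ i ∈ Finset.range n, (e^mm)^i) + z by ring, zpow_add]
              group
  -- decompose g
  have hg_mem : g ∈ (Subgroup.zpowers a : Set G) * (Subgroup.zpowers b : Set G) := by
    rw [← Subgroup.normal_mul, hgen]; trivial
  obtain ⟨x, hx, y, hy, hxy⟩ := hg_mem
  have hxy' : x * y = g := hxy
  obtain ⟨za, hza⟩ := Subgroup.mem_zpowers_iff.mp hx
  obtain ⟨zb, hzb⟩ := Subgroup.mem_zpowers_iff.mp hy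
  set m0 : ℕ := (zb % (2^(r+s) : ℤ)).toNat with hm0def
  have hbm0 : b^m0 = b^zb := by
    have h1 : ((m0 : ℤ)) = zb % ((orderOf b : ℕ) : ℤ) := by
      rw [hb, hm0def, Int.toNat_of_nonneg (Int.emod_nonneg _ (by positivity))]
      push_cast; ring_nf
    rw [← zpow_natCast, h1, zpow_mod_orderOf]
  set z0 : ℤ := e^m0 * za with hz0def
  have hg_eq : g = b^m0 * a^z0 := by
    rw [← hxy', ← hza, ← hzb, ← hbm0, hmove m0 za]
  -- splitting lemma
  have hsplit : ∀ (p : ℕ) (w : ℤ), b^p * a^w = 1 → b^p = 1 ∧ a^w = 1 := by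
    intro p w h
    have hbp : b^p ∈ Subgroup.zpowers a ⊓ Subgroup.zpowers b := by
      constructor
      · have : b^p = (a^w)⁻¹ := by
          rw [eq_inv_iff_mul_eq_one]; exact h
        rw [this, ← zpow_neg]
        exact Subgroup.zpow_mem _ (Subgroup.mem_zpowers a) _
      · exact Subgroup.pow_mem _ (Subgroup.mem_zpowers b) p
    rw [hint, Subgroup.mem_bot] at hbp
    refine ⟨hbp, ?_⟩
    rw [hbp, one_mul] at h
    exact h
  -- g^N = 1
  have hgN : g ^ (2^(r+s-k)) = 1 := by rw [← hog]; exact pow_orderOf_eq_one g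
  -- 2^k ∣ m0
  have hb_ord_dvd : ∀ p : ℕ, b^p = 1 ↔ 2^(r+s) ∣ p := by
    intro p; rw [← hb]; exact orderOf_dvd_iff_pow_eq_one.symm
  have hdvd_m0 : 2^k ∣ m0 := by
    have h1 := hgN
    rw [hg_eq, hpow] at h1
    obtain ⟨h2, _⟩ := hsplit _ _ h1
    rw [hb_ord_dvd] at h2
    obtain ⟨q, hq⟩ := h2
    have hpk : (2:ℕ)^(r+s) = 2^k * 2^(r+s-k) := by rw [← pow_add]; congr 1; omega
    have hq' : m0 * 2^(r+s-k) = 2^k * q * 2^(r+s-k) := by rw [hq, hpk]; ring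
    have := Nat.eq_of_mul_eq_mul_right (show 0 < 2^(r+s-k) by positivity) hq'
    exact ⟨q, this⟩
  -- ¬ 2^(k+1) ∣ m0
  have hndvd_m0 : ¬ (2^(k+1) ∣ m0) := by
    intro ⟨q, hq⟩
    have hn' : g ^ (2^(r+s-k-1)) = a ^ (z0 * ∑ i ∈ Finset.range (2^(r+s-k-1)), (e^m0)^i) := by
      rw [hg_eq, hpow]
      have : b ^ (m0 * 2^(r+s-k-1)) = 1 := by
        rw [hb_ord_dvd]
        have hpk : (2:ℕ)^(r+s) = 2^(k+1) * 2^(r+s-k-1) := by rw [← pow_add]; congr 1; omega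
        exact ⟨q, by rw [hq, hpk]; ring⟩
      rw [this, one_mul]
    have hmem : g ^ (2^(r+s-k-1)) ∈ Subgroup.zpowers g ⊓ Subgroup.zpowers a := by
      constructor
      · exact Subgroup.pow_mem _ (Subgroup.mem_zpowers g) _
      · rw [hn']; exact Subgroup.zpow_mem _ (Subgroup.mem_zpowers a) _
    rw [hga, Subgroup.mem_bot] at hmem
    have := orderOf_dvd_iff_pow_eq_one.mpr hmem
    rw [hog] at this
    have := (Nat.pow_dvd_pow_iff_le_right (by norm_num : 1 < 2)).mp this
    omega
  obtain ⟨u, hu_eq⟩ := hdvd_m0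
  have hu_odd : Odd u := by
    rcases Nat.even_or_odd u with h | h
    · exfalso; apply hndvd_m0
      obtain ⟨v, hv⟩ := h
      exact ⟨v, by rw [hu_eq, hv, pow_succ]; ring⟩
    · exact h
  -- e^2 = 1 + 2^(r+t+1) * w0 with w0 odd
  have hε2 : ε^2 = 1 := by rcases hε with h | h <;> rw [h] <;> norm_num
  obtain ⟨c0, hc0⟩ : ∃ c0, r + t = c0 + 2 := ⟨r + t - 2, by omega⟩
  have he2 : e^2 = 1 + 2^(r+t+1) * (ε + 2^(r+t-1)) := by
    rw [he_def, hc0, show c0 + 2 + 1 = c0 + 3 by ring, show c0 + 2 - 1 = c0 + 1 by omega]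
    linear_combination hε2
  have hw0_odd : Odd (ε + 2^(r+t-1) : ℤ) := by
    have h1 : Odd ε := by rcases hε with h | h <;> rw [h] <;> decide
    have h2 : Even ((2:ℤ)^(r+t-1)) := by
      rw [hc0, show c0 + 2 - 1 = c0 + 1 by omega, pow_succ]
      exact ⟨2^c0, by ring⟩
    simpa using h1.add_even h2
  -- valuation facts
  have hval : ∀ v : ℕ, 1 ≤ v → Odd u → ∃ w : ℤ, Odd w ∧ e^(2^v * u) = 1 + 2^(r+t+v) * w := by
    intro v hv hu
    obtain ⟨v', rfl⟩ : ∃ v', v = v' + 1 := ⟨v-1, by omega⟩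
    obtain ⟨w, hw, hval'⟩ := aux_val (r+t+1) (by omega) _ hw0_odd v' u hu
    refine ⟨w, hw, ?_⟩
    have h1 : e^(2^(v'+1) * u) = (e^2)^(2^v' * u) := by
      rw [← pow_mul]
      congr 1
      ring
    rw [h1, he2, hval', show r+t+1+v' = r+t+(v'+1) by omega]
  obtain ⟨w1, hw1_odd, hw1⟩ := hval k hk0 hu_odd
  obtain ⟨w2, hw2_odd, hw2⟩ := hval (r+s) (by omega) hu_odd
  have hpk : (2:ℕ)^(r+s) = 2^k * 2^(r+s-k) := by rw [← pow_add]; congr 1; omega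
  have hEm : e^m0 = 1 + 2^(r+t+k) * w1 := by rw [hu_eq]; exact hw1
  have hEmN : (e^m0)^(2^(r+s-k)) = 1 + 2^(r+t+(r+s)) * w2 := by
    rw [← pow_mul, hu_eq, show 2^k*u*2^(r+s-k) = 2^(r+s)*u by rw [hpk]; ring]
    exact hw2
  set S : ℤ := ∑ i ∈ Finset.range (2^(r+s-k)), (e^m0)^i with hS
  have hgeo : S * (2^(r+t+k) * w1) = 2^(r+t+(r+s)) * w2 := by
    have h := geom_sum_mul (e^m0) (2^(r+s-k))
    rw [← hS, hEmN, show e^m0 - 1 = 2^(r+t+k)*w1 by rw [hEm]; ring] at h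
    linear_combination h
  -- a-part of g^N = 1
  have hA : a ^ (z0 * S) = 1 := by
    have h1 := hgN
    rw [hg_eq, hpow] at h1
    exact (hsplit _ _ h1).2
  have hZdvd : ((2:ℤ)^(2*r+s+t)) ∣ z0 * S := by
    have h2 := orderOf_dvd_iff_zpow_eq_one.mpr hA
    rw [ha] at h2
    push_cast at h2
    exact h2
  have hz0dvd : (2:ℤ)^(r+t+k) ∣ z0 := by
    obtain ⟨d, hd⟩ := hZdvd
    have key : z0 * w2 = 2^(r+t+k) * (d * w1) := by
      have h2 : z0 * (S * (2^(r+t+k)*w1)) = z0 * (2^(r+t+(r+s)) * w2) := by rw [hgeo]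
      have h3 : (2:ℤ)^(r+t+(r+s)) * (d * (2^(r+t+k) * w1)) = 2^(r+t+(r+s)) * (z0 * w2) := by
        rw [show (2:ℤ)^(r+t+(r+s)) = 2^(2*r+s+t) by congr 1; omega]
        calc (2:ℤ)^(2*r+s+t) * (d * (2^(r+t+k) * w1))
            = (2^(2*r+s+t) * d) * (2^(r+t+k) * w1) := by ring
          _ = z0 * S * (2^(r+t+k) * w1) := by rw [← hd]
          _ = z0 * (2^(r+t+(r+s)) * w2) := by rw [← hgeo]; ring
          _ = 2^(2*r+s+t) * (z0 * w2) := by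
              rw [show (2:ℤ)^(r+t+(r+s)) = 2^(2*r+s+t) by congr 1; omega]; ring
      have h4 := mul_left_cancel₀ (pow_ne_zero (r+t+(r+s)) (two_ne_zero)) h3
      rw [← h4]; ring
    have h5 : (2:ℤ)^(r+t+k) ∣ z0 * w2 := ⟨d * w1, key⟩
    refine Prime.pow_dvd_of_dvd_mul_right Int.prime_two _ ?_ h5
    rw [← even_iff_two_dvd]
    exact (Int.not_even_iff_odd.mpr hw2_odd)
  -- inverse of u mod 2^(r+s)
  have hu_cop : Nat.Coprime u (2^(r+s)) := by
    apply Nat.Coprime.pow_right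
    rw [Nat.coprime_two_right]
    exact hu_odd
  obtain ⟨u', hu'⟩ := Nat.exists_mul_mod_eq_one_of_coprime hu_cop
    (Nat.one_lt_pow (by omega) (by norm_num))
  obtain ⟨q3, hq3⟩ : ∃ q3, u * u' = 2^(r+s) * q3 + 1 := by
    have h := Nat.div_add_mod (u*u') (2^(r+s))
    rw [hu'.2] at h
    exact ⟨u*u' / 2^(r+s), h.symm⟩
  have hu'_odd : Odd u' := by
    have h : Odd (u * u') := by
      rw [hq3]
      obtain ⟨d, hd⟩ : ∃ d, r+s = d+1 := ⟨r+s-1, by omega⟩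
      refine Even.add_one ⟨2^d * q3, ?_⟩
      rw [hd, pow_succ]; ring
    exact (Nat.odd_mul.mp h).2
  have hg2rs : g^(2^(r+s)) = 1 := by
    rw [show (2:ℕ)^(r+s) = 2^(r+s-k)*2^k by rw [← pow_add]; congr 1; omega,
      pow_mul, hgN, one_pow]
  have hgu : Subgroup.zpowers g = Subgroup.zpowers (g ^ u') := by
    apply le_antisymm
    · rw [Subgroup.zpowers_le]
      have hgg : (g^u')^u = g := by
        rw [← pow_mul, mul_comm u' u, hq3, pow_add, pow_mul, hg2rs, one_pow, one_mul, pow_one]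
      have hmem := Subgroup.pow_mem _ (Subgroup.mem_zpowers (g^u')) u
      rwa [hgg] at hmem
    · rw [Subgroup.zpowers_le]
      exact Subgroup.pow_mem _ (Subgroup.mem_zpowers g) u'
  have hb2rs : b^(2^(r+s)) = 1 := by rw [← hb]; exact pow_orderOf_eq_one b
  set S' : ℤ := ∑ i ∈ Finset.range u', (e^m0)^i with hS'
  have hgu' : g ^ u' = b^(2^k) * a^(z0 * S') := by
    rw [hg_eq, hpow]
    congr 1
    have hmu : m0 * u' = 2^k + 2^(r+s)*(2^k*q3) := by
      rw [hu_eq, mul_assoc, hq3]; ring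
    rw [hmu, pow_add, pow_mul, hb2rs, one_pow, mul_one]
  set j : ℕ := (z0 * S' % (2:ℤ)^(2*r+s+t)).toNat with hj
  have hjz : (j:ℤ) = z0 * S' % (2:ℤ)^(2*r+s+t) :=
    Int.toNat_of_nonneg (Int.emod_nonneg _ (by positivity))
  have hdvd_zS' : (2:ℤ)^(r+t+k) ∣ z0 * S' := hz0dvd.mul_right _
  have hdvd_j_int : (2:ℤ)^(r+t+k) ∣ (j:ℤ) := by
    rw [hjz, Int.emod_def]
    exact dvd_sub hdvd_zS' (Dvd.dvd.mul_right (pow_dvd_pow 2 (by omega)) _)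
  have hdvd_j : 2^(r+t+k) ∣ j := by
    have h := hdvd_j_int
    rwa [show ((2:ℤ)^(r+t+k)) = ((2^(r+t+k) : ℕ) : ℤ) by push_cast; ring,
      Int.natCast_dvd_natCast] at h
  have haj : a^j = a^(z0*S') := by
    rw [← zpow_natCast, hjz,
      show (2:ℤ)^(2*r+s+t) = ((orderOf a : ℕ):ℤ) by rw [ha]; push_cast; ring]
    exact zpow_mod_orderOf a _
  refine ⟨j, hdvd_j, ?_⟩
  rw [hgu]
  congr 1
  rw [hgu', haj]
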